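/- arXiv:2605.26008 — 3 statements merged into one kernel-verified Lean document; each statement's English description precedes it below -/
import Mathlib

section
/- For all real numbers a and b with a + b ≠ 0, one has (tanh(a) + tanh(b))/(a + b) ≤ (1/2)·(tanh(a)/a + tanh(b)/b), where tanh(x)/x is interpreted as 1 at x = 0. -/
/-- `tanh x / x`, extended continuously by the value `1` at `x = 0`. -/
noncomputable def thDiv (x : ℝ) : ℝ := if x = 0 then 1 else Real.tanh x / x

lemma hasDerivAt_tanh' (x : ℝ) : HasDerivAt Real.tanh (1 / Real.cosh x ^ 2) x := by
  have h := (Real.hasDerivAt_sinh x).div (Real.hasDerivAt_cosh x) (Real.cosh_pos x).ne'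
  rw [show Real.sinh / Real.cosh = Real.tanh by funext y; simp [Real.tanh_eq_sinh_div_cosh]] at h
  refine h.congr_deriv ?_
  have := Real.cosh_sq_sub_sinh_sq x
  field_simp
  ring_nf
  nlinarith [this]

lemma sinh_le_mul_cosh {x : ℝ} (hx : 0 ≤ x) : Real.sinh x ≤ x * Real.cosh x := by
  have hmono : MonotoneOn (fun t : ℝ => t * Real.cosh t - Real.sinh t) (Set.Ici 0) := by
    apply monotoneOn_of_deriv_nonneg (convex_Ici 0)
    · fun_prop
    · intro t _
      exact (((hasDerivAt_id t).mul (Real.hasDerivAt_cosh t)).sub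
        (Real.hasDerivAt_sinh t)).differentiableAt.differentiableWithinAt
    · intro t ht
      rw [interior_Ici, Set.mem_Ioi] at ht
      have hd := ((hasDerivAt_id t).mul (Real.hasDerivAt_cosh t)).sub (Real.hasDerivAt_sinh t)
      simp only [id_eq] at hd
      rw [show deriv (fun t : ℝ => t * Real.cosh t - Real.sinh t) t = _ from hd.deriv]
      have := Real.sinh_pos_iff.2 ht
      simp only [id_eq, one_mul]
      nlinarith
  have := hmono Set.self_mem_Ici (Set.mem_Ici.2 hx) hx
  simp only [Real.cosh_zero, Real.sinh_zero, zero_mul, sub_zero, mul_zero] at this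
  linarith

lemma tanh_le_self {x : ℝ} (hx : 0 ≤ x) : Real.tanh x ≤ x := by
  rw [Real.tanh_eq_sinh_div_cosh, div_le_iff₀ (Real.cosh_pos x)]
  exact sinh_le_mul_cosh hx

lemma thDiv_neg (x : ℝ) : thDiv (-x) = thDiv x := by
  unfold thDiv
  rcases eq_or_ne x 0 with h | h
  · simp [h]
  · rw [if_neg (neg_ne_zero.2 h), if_neg h, Real.tanh_neg, neg_div_neg_eq]

lemma thDiv_le_one (x : ℝ) : thDiv x ≤ 1 := by
  rcases lt_trichotomy x 0 with h | h | h
  · rw [← thDiv_neg, thDiv, if_neg (neg_ne_zero.2 h.ne)]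
    rw [div_le_one (by linarith)]
    exact tanh_le_self (by linarith)
  · simp [thDiv, h]
  · rw [thDiv, if_neg h.ne', div_le_one h]
    exact tanh_le_self h.le

lemma thDiv_anti {x y : ℝ} (hx : 0 < x) (hxy : x ≤ y) : thDiv y ≤ thDiv x := by
  have hy : 0 < y := lt_of_lt_of_le hx hxy
  have key : AntitoneOn (fun t : ℝ => Real.tanh t / t) (Set.Ioi 0) := by
    apply antitoneOn_of_deriv_nonpos (convex_Ioi 0)
    · apply ContinuousOn.div
      · exact fun t _ => (hasDerivAt_tanh' t).continuousAt.continuousWithinAt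
      · fun_prop
      · intro t ht; exact (Set.mem_Ioi.1 ht).ne'
    · intro t ht
      rw [interior_Ioi, Set.mem_Ioi] at ht
      exact ((hasDerivAt_tanh' t).div (hasDerivAt_id t) ht.ne').differentiableAt.differentiableWithinAt
    · intro t ht
      rw [interior_Ioi, Set.mem_Ioi] at ht
      have hd := (hasDerivAt_tanh' t).div (hasDerivAt_id t) ht.ne'
      simp only [id_eq] at hd
      rw [show deriv (fun t : ℝ => Real.tanh t / t) t = _ from hd.deriv]
      have hc := Real.cosh_pos t
      have h2 : 2 * t ≤ Real.sinh (2 * t) := (Real.self_lt_sinh_iff.2 (by linarith)).le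
      rw [Real.sinh_two_mul] at h2
      have htanh : t / Real.cosh t ^ 2 ≤ Real.tanh t := by
        rw [Real.tanh_eq_sinh_div_cosh, div_le_div_iff₀ (by positivity) hc]
        nlinarith
      apply div_nonpos_of_nonpos_of_nonneg
      · simp only [mul_one, one_div]
        have h3 : (Real.cosh t ^ 2)⁻¹ * t = t / Real.cosh t ^ 2 := by ring
        rw [h3]
        linarith
      · positivity
  rw [thDiv, thDiv, if_neg hx.ne', if_neg hy.ne']
  exact key (Set.mem_Ioi.2 hx) (Set.mem_Ioi.2 hy) hxy

lemma thDiv_abs_anti {x y : ℝ} (h : |x| ≤ |y|) : thDiv y ≤ thDiv x := by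
  have hx : thDiv x = thDiv |x| := by
    rcases abs_choice x with h' | h'
    · rw [h']
    · rw [h', thDiv_neg]
  have hy : thDiv y = thDiv |y| := by
    rcases abs_choice y with h' | h'
    · rw [h']
    · rw [h', thDiv_neg]
  rw [hx, hy]
  rcases eq_or_lt_of_le (abs_nonneg x) with h0 | h0
  · rw [← h0]
    calc thDiv |y| ≤ 1 := thDiv_le_one _
    _ = thDiv 0 := by simp [thDiv]
  · exact thDiv_anti h0 h

lemma aux_pos (a b : ℝ) (ha : a ≠ 0) (hb : b ≠ 0) (hab : 0 < a + b) :
    (Real.tanh a + Real.tanh b) / (a + b) ≤ (1 / 2) * (thDiv a + thDiv b) := by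
  have hta : Real.tanh a = a * thDiv a := by
    rw [thDiv, if_neg ha]; field_simp
  have htb : Real.tanh b = b * thDiv b := by
    rw [thDiv, if_neg hb]; field_simp
  rw [div_le_iff₀ hab, hta, htb]
  have key : (a - b) * (thDiv a - thDiv b) ≤ 0 := by
    rcases le_total a b with h | h
    · have hb' : 0 < b := by linarith
      have habs : |a| ≤ |b| := by
        rw [abs_of_pos hb']; exact abs_le.2 ⟨by linarith, h⟩
      have := thDiv_abs_anti habs
      exact mul_nonpos_of_nonpos_of_nonneg (by linarith) (by linarith)
    · have ha' : 0 < a := by linarith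
      have habs : |b| ≤ |a| := by
        rw [abs_of_pos ha']; exact abs_le.2 ⟨by linarith, h⟩
      have := thDiv_abs_anti habs
      exact mul_nonpos_of_nonneg_of_nonpos (by linarith) (by linarith)
  nlinarith [key]

/-- For all real `a`, `b` with `a + b ≠ 0`,
`(tanh a + tanh b)/(a + b) ≤ (1/2) * (tanh a / a + tanh b / b)`,
where `tanh x / x` is interpreted as `1` at `x = 0`. -/
theorem tanh_sum_div_le_half_add (a b : ℝ) (hab : a + b ≠ 0) :
    (Real.tanh a + Real.tanh b) / (a + b) ≤ (1 / 2) * (thDiv a + thDiv b) := by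
  rcases eq_or_ne a 0 with ha | ha
  · subst ha
    simp only [Real.tanh_zero, zero_add] at hab ⊢
    have hb1 := thDiv_le_one b
    have h0 : thDiv 0 = 1 := by simp [thDiv]
    have hbv : thDiv b = Real.tanh b / b := if_neg hab
    rw [h0, ← hbv]
    linarith
  rcases eq_or_ne b 0 with hb | hb
  · subst hb
    simp only [Real.tanh_zero, add_zero] at hab ⊢
    have ha1 := thDiv_le_one a
    have h0 : thDiv 0 = 1 := by simp [thDiv]
    have hav : thDiv a = Real.tanh a / a := if_neg hab
    rw [h0, ← hav]
    linarith
  rcases lt_or_gt_of_ne hab with h | h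
  · have := aux_pos (-a) (-b) (neg_ne_zero.2 ha) (neg_ne_zero.2 hb) (by linarith)
    rw [Real.tanh_neg, Real.tanh_neg, thDiv_neg, thDiv_neg] at this
    have heq : (-Real.tanh a + -Real.tanh b) / (-a + -b)
        = (Real.tanh a + Real.tanh b) / (a + b) := by
      rw [show (-Real.tanh a + -Real.tanh b) = -(Real.tanh a + Real.tanh b) by ring,
        show (-a + -b) = -(a + b) by ring, neg_div_neg_eq]
    rwa [heq] at this
  · exact aux_pos a b ha hb h
end

section
/- For every β > 0 and E ∈ ℝ, one has tanh(βE/2) = −(2/β)·∑_{n∈ℤ} 1/(i·ω_n − E), where ω_n = π(2n+1)/β and the sum is understood as the principal value limit lim_{N→∞} ∑_{n=−N}^{N−1}. -/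
open Real Filter

noncomputable section

lemma integrand_eq (a : ℝ) (n : ℤ) (x : ℝ) :
    Complex.exp (2 * π * Complex.I * (-n) * x / 1) * Complex.cosh (a * x - a / 2) =
      (Complex.exp (-(a/2) : ℂ) * Complex.exp (((a : ℂ) - 2*π*Complex.I*n) * x)
        + Complex.exp ((a/2) : ℂ) * Complex.exp ((-(a : ℂ) - 2*π*Complex.I*n) * x)) / 2 := by
  simp only [Complex.cosh]
  have h : ∀ u v : ℂ, Complex.exp u * ((Complex.exp v + Complex.exp (-v))/2)
      = (Complex.exp (u+v) + Complex.exp (u + -v))/2 := by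
    intro u v
    rw [Complex.exp_add, Complex.exp_add]
    ring
  rw [h, ← Complex.exp_add, ← Complex.exp_add]
  congr 3 <;> push_cast <;> ring

lemma mat_integral (a : ℝ) (ha : a ≠ 0) (n : ℤ) :
    ∫ x in (0:ℝ)..1, Complex.exp (2 * π * Complex.I * (-n) * x / 1) * Complex.cosh (a * x - a / 2)
      = ((Real.sinh (a/2) * (2*a) / (a^2 + 4*π^2*(n:ℝ)^2) : ℝ) : ℂ) := by
  have hc1 : ((a : ℂ) - 2*π*Complex.I*n) ≠ 0 := by
    intro h
    apply ha
    have := congrArg Complex.re h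
    simpa using this
  have hc2 : (-(a : ℂ) - 2*π*Complex.I*n) ≠ 0 := by
    intro h
    apply ha
    have := congrArg Complex.re h
    simpa using this
  simp only [integrand_eq a n]
  rw [intervalIntegral.integral_div]
  have hint1 : IntervalIntegrable (fun x : ℝ => Complex.exp (-(↑a / 2)) * Complex.exp ((↑a - 2 * ↑π * Complex.I * ↑n) * ↑x)) MeasureTheory.volume 0 1 := (Continuous.intervalIntegrable (by fun_prop) 0 1)
  have hint2 : IntervalIntegrable (fun x : ℝ => Complex.exp ((↑a / 2)) * Complex.exp ((-↑a - 2 * ↑π * Complex.I * ↑n) * ↑x)) MeasureTheory.volume 0 1 := (Continuous.intervalIntegrable (by fun_prop) 0 1)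
  rw [intervalIntegral.integral_add hint1 hint2]
  rw [intervalIntegral.integral_const_mul, intervalIntegral.integral_const_mul,
    integral_exp_mul_complex hc1, integral_exp_mul_complex hc2]
  simp only [Complex.ofReal_one, Complex.ofReal_zero, mul_zero, mul_one, Complex.exp_zero]
  have he1 : Complex.exp (((a : ℂ) - 2*π*Complex.I*n)) = Complex.exp a := by
    rw [sub_eq_add_neg, Complex.exp_add]
    have : Complex.exp (-(2*π*Complex.I*n)) = 1 := by
      rw [← Complex.exp_int_mul_two_pi_mul_I (-n)]
      congr 1; push_cast; ring
    rw [this, mul_one]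
  have he2 : Complex.exp ((-(a : ℂ) - 2*π*Complex.I*n)) = Complex.exp (-a) := by
    rw [sub_eq_add_neg, Complex.exp_add]
    have : Complex.exp (-(2*π*Complex.I*n)) = 1 := by
      rw [← Complex.exp_int_mul_two_pi_mul_I (-n)]
      congr 1; push_cast; ring
    rw [this, mul_one]
  rw [he1, he2]
  have hd0 : (((a^2 + 4*π^2*(n:ℝ)^2 : ℝ)) : ℂ) ≠ 0 := by
    have : (0:ℝ) < a^2 + 4*π^2*(n:ℝ)^2 := by positivity
    exact_mod_cast ne_of_gt this
  push_cast at hd0 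
  have k1 : Complex.exp (-((a:ℂ)/2)) * (Complex.exp (a:ℂ) - 1) = 2 * Complex.sinh ((a:ℂ)/2) := by
    rw [mul_sub, ← Complex.exp_add, show (-((a:ℂ)/2) + ↑a : ℂ) = ((a:ℂ)/2 : ℂ) by ring, mul_one]
    simp only [Complex.sinh]
    ring
  have k2 : Complex.exp ((a:ℂ)/2) * (Complex.exp (-(a:ℂ)) - 1) = -(2 * Complex.sinh ((a:ℂ)/2)) := by
    rw [mul_sub, ← Complex.exp_add, show (((a:ℂ)/2) + -(a:ℂ) : ℂ) = -((a:ℂ)/2 : ℂ) by ring, mul_one]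
    simp only [Complex.sinh]
    ring
  rw [← mul_div_assoc, ← mul_div_assoc, k1, k2]
  have hprod : (((a:ℂ) - 2*π*Complex.I*n)) * ((-(a:ℂ) - 2*π*Complex.I*n)) = -((a:ℂ)^2 + 4*(π:ℂ)^2*(n:ℂ)^2) := by
    linear_combination (4*(π:ℂ)^2*(n:ℂ)^2) * Complex.I_sq
  push_cast
  field_simp
  rw [eq_div_iff (by convert hd0 using 1; ring)]
  linear_combination (-2 * (a:ℂ) * Complex.sinh ((a:ℂ)/2)) * hprod


lemma coth_hasSum (a : ℝ) (ha : a ≠ 0) :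
    HasSum (fun n : ℤ => 2 * a / (a ^ 2 + 4 * π ^ 2 * (n : ℝ) ^ 2))
      (Real.cosh (a / 2) / Real.sinh (a / 2)) := by
  haveI : Fact (0 < (1:ℝ)) := ⟨one_pos⟩
  set f : ℝ → ℂ := fun x => Complex.cosh ((a : ℂ) * (x : ℂ) - (a : ℂ) / 2) with hf
  have hper : f 0 = f 1 := by
    simp only [hf]
    norm_num
    congr 1
    ring
  have hcont : Continuous f := by fun_prop
  set F : C(AddCircle (1:ℝ), ℂ) :=
    ⟨AddCircle.liftIco 1 0 f, AddCircle.liftIco_zero_continuous hper hcont.continuousOn⟩ with hF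
  have hcoeff : ∀ n : ℤ,
      fourierCoeff (⇑F) n = ((Real.sinh (a/2) * (2*a) / (a^2 + 4*π^2*(n:ℝ)^2) : ℝ) : ℂ) := by
    intro n
    have h1 : fourierCoeff (⇑F) n = fourierCoeffOn (lt_add_of_pos_right 0 one_pos) f n :=
      fourierCoeff_liftIco_eq f n
    rw [h1, fourierCoeffOn_eq_integral]
    norm_num
    have heq : ∀ x : ℝ, (starRingEnd ℂ) (Complex.exp (2 * ↑π * Complex.I * ↑n * ↑x)) * f x
        = Complex.exp (2 * (π:ℂ) * Complex.I * (-(n:ℂ)) * (x:ℂ) / 1) * Complex.cosh ((a:ℂ) * x - (a:ℂ) / 2) := by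
      intro x
      congr 1
      rw [← Complex.exp_conj]
      congr 1
      simp only [map_mul, map_div₀, Complex.conj_I, Complex.conj_ofReal, map_ofNat, map_intCast]
      push_cast
      ring
    rw [intervalIntegral.integral_congr (fun x _ => heq x), mat_integral a ha n]
    push_cast
    ring
  have hsumR : Summable (fun n : ℤ => Real.sinh (a/2) * (2*a) / (a^2 + 4*π^2*(n:ℝ)^2)) := by
    have hbase : Summable (fun n : ℤ => 1 / (a^2 + 4*π^2*(n:ℝ)^2)) := by
      have hg : Summable (fun n : ℤ => (1/(4*π^2)) * (1 / (n:ℝ)^2)) :=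
        (Real.summable_one_div_int_pow.mpr one_lt_two).mul_left _
      apply Summable.of_norm_bounded_eventually hg
      filter_upwards [Filter.eventually_cofinite_ne (0:ℤ)] with n hn
      have hn0 : ((n:ℝ)) ≠ 0 := Int.cast_ne_zero.mpr hn
      have hle : 4*π^2*(n:ℝ)^2 ≤ a^2 + 4*π^2*(n:ℝ)^2 := by nlinarith [sq_nonneg a]
      rw [Real.norm_eq_abs, abs_of_nonneg (by positivity)]
      calc 1/(a^2 + 4*π^2*(n:ℝ)^2) ≤ 1/(4*π^2*(n:ℝ)^2) :=
            one_div_le_one_div_of_le (by positivity) hle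
        _ = (1/(4*π^2)) * (1/(n:ℝ)^2) := by rw [div_mul_div_comm, one_mul]
    simpa [mul_one_div, div_eq_mul_inv] using hbase.mul_left (Real.sinh (a/2) * (2*a))
  have hsum : Summable (fourierCoeff (⇑F)) := by
    apply Summable.congr (Complex.summable_ofReal.mpr hsumR)
    intro n
    exact (hcoeff n).symm
  have h0 := has_pointwise_sum_fourier_series_of_summable hsum (0 : AddCircle (1:ℝ))
  have hF0 : F (0 : AddCircle (1:ℝ)) = ((Real.cosh (a/2) : ℝ) : ℂ) := by
    show AddCircle.liftIco 1 0 f (((0:ℝ) : AddCircle (1:ℝ))) = _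
    rw [AddCircle.liftIco_coe_apply (by norm_num : (0:ℝ) ∈ Set.Ico (0:ℝ) (0+1))]
    simp only [hf]
    rw [show ((a:ℂ) * ((0:ℝ):ℂ) - (a:ℂ)/2 : ℂ) = -((a:ℂ)/2) by push_cast; ring,
      Complex.cosh_neg, Complex.ofReal_cosh]
    push_cast
    ring_nf
  rw [hF0] at h0
  simp_rw [hcoeff, fourier_eval_zero, smul_eq_mul, mul_one] at h0
  have hR : HasSum (fun n : ℤ => Real.sinh (a/2) * (2*a) / (a^2 + 4*π^2*(n:ℝ)^2))
      (Real.cosh (a/2)) := Complex.hasSum_ofReal.mp h0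
  have hs2 := hR.div_const (Real.sinh (a/2))
  have hsne : Real.sinh (a/2) ≠ 0 := Real.sinh_ne_zero.mpr (div_ne_zero ha two_ne_zero)
  have hfun : (fun n : ℤ => 2 * a / (a ^ 2 + 4 * π ^ 2 * (n : ℝ) ^ 2))
      = fun n : ℤ => (Real.sinh (a/2) * (2*a) / (a^2 + 4*π^2*(n:ℝ)^2)) / Real.sinh (a/2) := by
    funext n
    have hd : a^2 + 4*π^2*(n:ℝ)^2 ≠ 0 := by positivity
    field_simp
  rw [hfun]
  exact hs2

lemma int_hasSum (t : ℝ) (ht : 0 < t) :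
    HasSum (fun n : ℤ => 1/(t^2+(n:ℝ)^2)) (π/t * (Real.cosh (π*t) / Real.sinh (π*t))) := by
  have ha : (2*π*t) ≠ 0 := by positivity
  have h := (coth_hasSum (2*π*t) ha).mul_left (π/t)
  have e2 : (2*π*t)/2 = π*t := by ring
  rw [e2] at h
  have hfun : (fun n : ℤ => (π/t) * (2*(2*π*t)/((2*π*t)^2 + 4*π^2*(n:ℝ)^2)))
      = fun n : ℤ => 1/(t^2+(n:ℝ)^2) := by
    funext n
    have h1 : t^2 + (n:ℝ)^2 ≠ 0 := by positivity
    have h2 : (2*π*t)^2 + 4*π^2*(n:ℝ)^2 ≠ 0 := by positivity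
    field_simp
    ring
  rw [hfun] at h
  exact h

lemma odd_hasSum (t : ℝ) (ht : 0 < t) :
    HasSum (fun k : ℤ => 1/(t^2 + (2*(k:ℝ)+1)^2)) (π/(2*t) * Real.tanh (π*t/2)) := by
  have hS := int_hasSum t ht
  have hA' := (int_hasSum (t/2) (by positivity)).mul_left (1/4)
  set f : ℤ → ℝ := fun m => 1/(t^2+(m:ℝ)^2) with hfdef
  have hfeA : (fun k : ℤ => (1/4) * (1/((t/2)^2+(k:ℝ)^2))) = fun k : ℤ => f (2*k) := by
    funext k
    simp only [hfdef]
    push_cast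
    have h1 : (t/2)^2 + (k:ℝ)^2 ≠ 0 := by positivity
    have h2 : t^2 + (2*(k:ℝ))^2 ≠ 0 := by positivity
    field_simp
    ring
  rw [hfeA] at hA'
  classical
  set fev : ℤ → ℝ := fun m => if Even m then f m else 0 with hev
  have hinj : Function.Injective (fun k : ℤ => 2*k) := fun x y h => by dsimp only at h; omega
  have hvan : ∀ m ∉ Set.range (fun k : ℤ => 2*k), fev m = 0 := by
    intro m hm
    simp only [hev]
    rw [if_neg]
    intro hme
    obtain ⟨k, hk⟩ := hme
    exact hm ⟨k, by dsimp only; omega⟩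
  have hevsum : HasSum fev ((1/4) * (π/(t/2) * (Real.cosh (π*(t/2))/Real.sinh (π*(t/2))))) := by
    refine (Function.Injective.hasSum_iff hinj hvan).mp ?_
    have hcomp : (fev ∘ fun k : ℤ => 2*k) = fun k : ℤ => f (2*k) := by
      funext k
      simp [hev, even_two_mul]
    rw [hcomp]
    exact hA'
  have hodd := hS.sub hevsum
  have hinj2 : Function.Injective (fun k : ℤ => 2*k+1) := fun x y h => by dsimp only at h; omega
  have hvan2 : ∀ m ∉ Set.range (fun k : ℤ => 2*k+1), f m - fev m = 0 := by
    intro m hm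
    have hmeven : Even m := by
      rcases Int.even_or_odd m with h | h
      · exact h
      · exfalso
        obtain ⟨k, hk⟩ := h
        exact hm ⟨k, by dsimp only; omega⟩
    simp [hev, hmeven]
  have h3 := (Function.Injective.hasSum_iff (f := fun m => f m - fev m) hinj2 hvan2).mpr hodd
  have hfo : ((fun m => f m - fev m) ∘ fun k : ℤ => 2*k+1) = fun k : ℤ => 1/(t^2+(2*(k:ℝ)+1)^2) := by
    funext k
    have hoddk : ¬ Even (2*k+1) := by
      simp [Int.even_add_one, parity_simps]
    simp only [Function.comp, hev, hoddk, if_false, sub_zero, hfdef]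
    push_cast
    ring_nf
  rw [hfo] at h3
  convert h3 using 1
  rw [show π*t = 2*(π*t/2) by ring, show π*(t/2) = π*t/2 by ring,
    Real.cosh_two_mul, Real.sinh_two_mul, Real.tanh_eq_sinh_div_cosh]
  have hs : Real.sinh (π*t/2) ≠ 0 := ne_of_gt (by positivity)
  have hc : Real.cosh (π*t/2) ≠ 0 := ne_of_gt (Real.cosh_pos _)
  field_simp
  ring

lemma nat_hasSum (β E : ℝ) (hβ : 0 < β) (hE : 0 < E) :
    HasSum (fun n : ℕ => 1/((π*(2*(n:ℝ)+1)/β)^2 + E^2)) (β/(4*E) * Real.tanh (β*E/2)) := by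
  have hpi : (0:ℝ) < π := Real.pi_pos
  have ht : 0 < β*E/π := by positivity
  have h3 := (odd_hasSum (β*E/π) ht).mul_left (β^2/π^2)
  have hval : (β^2/π^2) * (π/(2*(β*E/π)) * Real.tanh (π*(β*E/π)/2))
      = β/(2*E) * Real.tanh (β*E/2) := by
    rw [show π*(β*E/π)/2 = β*E/2 by field_simp]
    field_simp
  rw [hval] at h3
  have hfun : (fun k : ℤ => (β^2/π^2) * (1/((β*E/π)^2 + (2*(k:ℝ)+1)^2)))
      = fun k : ℤ => 1/((π*(2*(k:ℝ)+1)/β)^2 + E^2) := by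
    funext k
    have q1 : (0:ℝ) < (β*E/π)^2 := pow_pos ht 2
    have h1 : (β*E/π)^2 + (2*(k:ℝ)+1)^2 ≠ 0 := by nlinarith [sq_nonneg (2*(k:ℝ)+1)]
    have h2 : (π*(2*(k:ℝ)+1)/β)^2 + E^2 ≠ 0 := by
      nlinarith [sq_nonneg (π*(2*(k:ℝ)+1)/β), pow_pos hE 2]
    field_simp
    ring
  rw [hfun] at h3
  have h5 := h3.nat_add_neg_add_one.div_const 2
  have hfe : (fun n : ℕ => ((fun k : ℤ => 1/((π*(2*(k:ℝ)+1)/β)^2 + E^2)) (n:ℤ)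
        + (fun k : ℤ => 1/((π*(2*(k:ℝ)+1)/β)^2 + E^2)) (-((n:ℤ)+1)))/2)
      = (fun n : ℕ => 1/((π*(2*(n:ℝ)+1)/β)^2 + E^2)) := by
    funext n
    dsimp only
    push_cast
    ring_nf
  rw [hfe] at h5
  rw [show (β/(2*E) * Real.tanh (β*E/2))/2 = β/(4*E) * Real.tanh (β*E/2) by ring] at h5
  exact h5

lemma r_hasSum (β E : ℝ) (hβ : 0 < β) :
    HasSum (fun n : ℕ => -2*E/((π*(2*(n:ℝ)+1)/β)^2 + E^2)) (-(β/2) * Real.tanh (β*E/2)) := by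
  rcases lt_trichotomy E 0 with hE | hE | hE
  · have h := (nat_hasSum β (-E) hβ (by linarith)).mul_left (-2*E)
    have hfun : (fun n : ℕ => (-2*E) * (1/((π*(2*(n:ℝ)+1)/β)^2 + (-E)^2)))
        = fun n : ℕ => -2*E/((π*(2*(n:ℝ)+1)/β)^2 + E^2) := by
      funext n
      rw [neg_sq]
      ring
    rw [hfun] at h
    have hval : (-2*E) * (β/(4*(-E)) * Real.tanh (β*(-E)/2))
        = -(β/2) * Real.tanh (β*E/2) := by
      rw [show β*(-E)/2 = -(β*E/2) by ring, Real.tanh_neg]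
      have hE0 : E ≠ 0 := ne_of_lt hE
      field_simp
      ring
    rw [hval] at h
    exact h
  · subst hE
    have h0 : (fun n : ℕ => -2*(0:ℝ)/((π*(2*(n:ℝ)+1)/β)^2 + (0:ℝ)^2)) = fun _ : ℕ => (0:ℝ) := by
      funext n
      simp
    rw [h0, show β*(0:ℝ)/2 = 0 by ring, Real.tanh_zero, mul_zero]
    exact hasSum_zero
  · have h := (nat_hasSum β E hβ hE).mul_left (-2*E)
    have hfun : (fun n : ℕ => (-2*E) * (1/((π*(2*(n:ℝ)+1)/β)^2 + E^2)))
        = fun n : ℕ => -2*E/((π*(2*(n:ℝ)+1)/β)^2 + E^2) := by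
      funext n
      ring
    rw [hfun] at h
    have hval : (-2*E) * (β/(4*E) * Real.tanh (β*E/2)) = -(β/2) * Real.tanh (β*E/2) := by
      have hE0 : E ≠ 0 := ne_of_gt hE
      field_simp
      ring
    rw [hval] at h
    exact h

lemma pair_eq (β E : ℝ) (hβ : 0 < β) (n : ℕ) :
    (Complex.I * ((Real.pi * (2 * ((n:ℤ) : ℝ) + 1) / β : ℝ) : ℂ) - (E : ℂ))⁻¹
      + (Complex.I * ((Real.pi * (2 * ((((-1:ℤ)-(n:ℤ)) : ℤ) : ℝ) + 1) / β : ℝ) : ℂ) - (E : ℂ))⁻¹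
      = ((-2*E/((π*(2*(n:ℝ)+1)/β)^2 + E^2) : ℝ) : ℂ) := by
  set w : ℝ := π*(2*(n:ℝ)+1)/β with hw
  have hwpos : 0 < w := by
    have : (0:ℝ) < 2*(n:ℝ)+1 := by positivity
    rw [hw]
    positivity
  have hcast1 : ((Real.pi * (2 * ((n:ℤ) : ℝ) + 1) / β : ℝ) : ℂ) = ((w:ℝ):ℂ) := by
    rw [hw]; push_cast; ring
  have hcast2 : ((Real.pi * (2 * ((((-1:ℤ)-(n:ℤ)) : ℤ) : ℝ) + 1) / β : ℝ) : ℂ) = -((w:ℝ):ℂ) := by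
    rw [hw]; push_cast; ring
  rw [hcast1, hcast2]
  have h1 : Complex.I * ((w:ℝ):ℂ) - (E:ℂ) ≠ 0 := by
    intro h
    have h' := congrArg Complex.im h
    simp at h'
    linarith
  have h2 : Complex.I * (-((w:ℝ):ℂ)) - (E:ℂ) ≠ 0 := by
    intro h
    have h' := congrArg Complex.im h
    simp at h'
    linarith
  have hd : ((w^2 + E^2 : ℝ) : ℂ) ≠ 0 := by
    have : (0:ℝ) < w^2 + E^2 := by positivity
    exact_mod_cast ne_of_gt this
  push_cast at hd ⊢
  rw [inv_add_inv h1 h2]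
  rw [show (Complex.I * ((w:ℝ):ℂ) - (E:ℂ)) + (Complex.I * -((w:ℝ):ℂ) - (E:ℂ)) = -(2*(E:ℂ)) by ring]
  rw [show (Complex.I * ((w:ℝ):ℂ) - (E:ℂ)) * (Complex.I * -((w:ℝ):ℂ) - (E:ℂ))
      = (((w:ℝ):ℂ)^2 + (E:ℂ)^2 : ℂ) by linear_combination (-((w:ℝ):ℂ)^2) * Complex.I_sq]
  rw [neg_div]
  ring_nf

lemma sum_pairs (β E : ℝ) (hβ : 0 < β) (N : ℕ) :
    ∑ n ∈ Finset.Icc (-(N : ℤ)) ((N : ℤ) - 1),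
        (Complex.I * ((Real.pi * (2 * (n : ℝ) + 1) / β : ℝ) : ℂ) - (E : ℂ))⁻¹
      = ∑ n ∈ Finset.range N, ((-2*E/((π*(2*(n:ℝ)+1)/β)^2 + E^2) : ℝ) : ℂ) := by
  induction N with
  | zero => simp
  | succ N ih =>
    have h1 : Finset.Icc (-((N+1:ℕ) : ℤ)) (((N+1:ℕ) : ℤ) - 1)
        = insert (-1-(N:ℤ)) (insert ((N:ℤ)) (Finset.Icc (-(N:ℤ)) ((N:ℤ)-1))) := by
      ext m
      simp only [Finset.mem_Icc, Finset.mem_insert]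
      push_cast
      omega
    have hm1 : ((N:ℤ)) ∉ Finset.Icc (-(N:ℤ)) ((N:ℤ)-1) := by
      simp only [Finset.mem_Icc]
      omega
    have hm2 : (-1-(N:ℤ)) ∉ insert ((N:ℤ)) (Finset.Icc (-(N:ℤ)) ((N:ℤ)-1)) := by
      simp only [Finset.mem_insert, Finset.mem_Icc]
      omega
    rw [h1, Finset.sum_insert hm2, Finset.sum_insert hm1, ih, Finset.sum_range_succ]
    rw [add_comm (∑ n ∈ Finset.range N, _)]
    rw [← add_assoc]
    congr 1
    rw [add_comm]
    exact pair_eq β E hβ N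

/-- Matsubara series representation of `tanh`: for `β > 0` and `E ∈ ℝ`,
`tanh(βE/2) = −(2/β) ∑_{n ∈ ℤ} 1/(i ω_n − E)` with `ω_n = π(2n+1)/β`,
where the sum is the principal value limit `lim_{N → ∞} ∑_{n = −N}^{N−1}`.
Equivalently, the symmetric partial sums tend to `−(β/2) tanh(βE/2)`. -/
theorem matsubara_sum_tanh (β E : ℝ) (hβ : 0 < β) :
    Filter.Tendsto
      (fun N : ℕ => ∑ n ∈ Finset.Icc (-(N : ℤ)) ((N : ℤ) - 1),
        (Complex.I * ((Real.pi * (2 * (n : ℝ) + 1) / β : ℝ) : ℂ) - (E : ℂ))⁻¹)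
      Filter.atTop (nhds ((-(β / 2) * Real.tanh (β * E / 2) : ℝ) : ℂ)) := by
  have hr := (r_hasSum β E hβ).tendsto_sum_nat
  have htc := (Complex.continuous_ofReal.tendsto _).comp hr
  apply htc.congr
  intro N
  rw [Function.comp_apply, Complex.ofReal_sum, (sum_pairs β E hβ N)]
end
end

section
/- Let φ* ∈ L²(ℝᵈ) with ‖φ*‖ = 1 and define c(q) := ∫_{ℝᵈ} cos²(q·r/2)|φ*(r)|² dr − (∫_{ℝᵈ} cos(q·r/2)|φ*(r)|² dr)². Then sup_{q∈ℝᵈ} c(q) < 1, i.e., there exists ε > 0 such that c(q) ≤ 1 − ε for all q ∈ ℝᵈ. -/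
open MeasureTheory Filter
open scoped RealInnerProductSpace Real

lemma rl_cos (d : ℕ) (f : EuclideanSpace ℝ (Fin d) → ℝ) (hf : Integrable f)
    (a : ℝ) (ha : a ≠ 0) :
    Tendsto (fun q : EuclideanSpace ℝ (Fin d) => ∫ r, Real.cos (a * ⟪q, r⟫) * f r)
      (cocompact _) (nhds 0) := by
  have hgint : Integrable (fun v : EuclideanSpace ℝ (Fin d) => (f v : ℂ)) := hf.ofReal
  have hRL := tendsto_integral_exp_inner_smul_cocompact
    (fun v : EuclideanSpace ℝ (Fin d) => (f v : ℂ))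
  set c : ℝ := a / (2 * π) with hc
  have hcne : c ≠ 0 := div_ne_zero ha (by positivity)
  have hmap : Tendsto (fun q : EuclideanSpace ℝ (Fin d) => c • q)
      (cocompact _) (cocompact _) :=
    ((Homeomorph.smulOfNeZero c hcne).map_cocompact).le
  have h2 := hRL.comp hmap
  have h3 := (Complex.continuous_re.tendsto 0).comp h2
  simp only [Complex.zero_re] at h3
  convert h3 using 2 with q
  have hint : Integrable (fun v : EuclideanSpace ℝ (Fin d) =>
      Real.fourierChar (-⟪v, c • q⟫) • (f v : ℂ)) :=
    (Real.fourierIntegral_convergent_iff (c • q)).2 hgint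
  rw [Function.comp_apply, Function.comp_apply, ← RCLike.re_to_complex, ← integral_re hint]
  refine integral_congr_ae (Eventually.of_forall fun v => ?_)
  simp only [RCLike.re_to_complex, Circle.smul_def, Real.fourierChar_apply]
  have h4 : ((2 * π * -⟪v, c • q⟫ : ℝ) : ℂ) = ((-(a * ⟪q, v⟫) : ℝ) : ℂ) := by
    norm_cast
    rw [real_inner_smul_right, real_inner_comm]
    rw [hc]
    field_simp
  rw [h4]
  have h5 : ∀ z : ℂ, (z * (f v : ℂ)).re = z.re * f v := fun z => by simp [Complex.mul_re]
  rw [smul_eq_mul, h5, Complex.exp_ofReal_mul_I_re, Real.cos_neg]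

lemma hyperplane_null (d : ℕ) (q : EuclideanSpace ℝ (Fin d)) (hq : q ≠ 0) (t : ℝ) :
    volume {r : EuclideanSpace ℝ (Fin d) | ⟪q, r⟫ = t} = 0 := by
  set S : Submodule ℝ (EuclideanSpace ℝ (Fin d)) := LinearMap.ker (innerSL ℝ q).toLinearMap with hS
  have hStop : S ≠ ⊤ := by
    intro h
    have hqS : q ∈ S := h ▸ Submodule.mem_top
    have : ⟪q, q⟫ = 0 := hqS
    exact hq (inner_self_eq_zero.mp this)
  set r₀ : EuclideanSpace ℝ (Fin d) := (t / ‖q‖ ^ 2) • q with hr₀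
  have hqr₀ : ⟪q, r₀⟫ = t := by
    rw [hr₀, real_inner_smul_right, real_inner_self_eq_norm_sq]
    field_simp [norm_ne_zero_iff.mpr hq]
  have hset : {r : EuclideanSpace ℝ (Fin d) | ⟪q, r⟫ = t}
      = (fun r => r + (-r₀)) ⁻¹' (S : Set (EuclideanSpace ℝ (Fin d))) := by
    ext r
    simp only [Set.mem_setOf_eq, Set.mem_preimage, SetLike.mem_coe, hS, LinearMap.mem_ker]
    constructor
    · intro h
      show ⟪q, r + (-r₀)⟫ = 0
      rw [inner_add_right, inner_neg_right, hqr₀, h]; ring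
    · intro h
      have : ⟪q, r + (-r₀)⟫ = 0 := h
      rw [inner_add_right, inner_neg_right, hqr₀] at this
      linarith
  rw [hset, measure_preimage_add_right]
  exact Measure.addHaar_submodule volume S hStop

/-- Let `φ* ∈ L²(ℝᵈ)` with `‖φ*‖ = 1` and
`c(q) = ∫ cos²(q·r/2)|φ*(r)|² dr − (∫ cos(q·r/2)|φ*(r)|² dr)²`.
Then `sup_q c(q) < 1`: there is `ε > 0` with `c(q) ≤ 1 − ε` for all `q`. -/
theorem variance_cos_sup_lt_one (d : ℕ) (φ : EuclideanSpace ℝ (Fin d) → ℝ)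
    (hmeas : Measurable φ)
    (hnorm : ∫ r, (φ r) ^ 2 = 1) :
    ∃ ε > 0, ∀ q : EuclideanSpace ℝ (Fin d),
      (∫ r, Real.cos (⟪q, r⟫ / 2) ^ 2 * (φ r) ^ 2)
          - (∫ r, Real.cos (⟪q, r⟫ / 2) * (φ r) ^ 2) ^ 2 ≤ 1 - ε := by
  -- integrability of f := φ^2
  have hf_int : Integrable (fun r : EuclideanSpace ℝ (Fin d) => (φ r) ^ 2) := by
    by_contra h
    rw [integral_undef h] at hnorm
    exact one_ne_zero hnorm.symm
  have hf_nn : ∀ r, (0:ℝ) ≤ (φ r) ^ 2 := fun r => sq_nonneg _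
  -- integrability of bounded multiples
  have hbdd_int : ∀ (g : EuclideanSpace ℝ (Fin d) → ℝ), Measurable g → (∀ r, |g r| ≤ 1) →
      Integrable (fun r => g r * (φ r) ^ 2) := by
    intro g hg hgb
    exact hf_int.bdd_mul (c := 1) hg.aestronglyMeasurable (Eventually.of_forall fun x => (Real.norm_eq_abs _).le.trans (hgb x))
  have hmeas_inner : ∀ q : EuclideanSpace ℝ (Fin d),
      Measurable (fun r : EuclideanSpace ℝ (Fin d) => ⟪q, r⟫) :=
    fun q => (innerSL ℝ q).continuous.measurable
  have hint1 : ∀ q : EuclideanSpace ℝ (Fin d),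
      Integrable (fun r => Real.cos (⟪q, r⟫ / 2) * (φ r) ^ 2) := by
    intro q
    exact hbdd_int _ (Real.measurable_cos.comp ((hmeas_inner q).div_const 2))
      (fun r => Real.abs_cos_le_one _)
  have hint2 : ∀ q : EuclideanSpace ℝ (Fin d),
      Integrable (fun r => Real.cos (⟪q, r⟫ / 2) ^ 2 * (φ r) ^ 2) := by
    intro q
    refine hbdd_int _ ((Real.measurable_cos.comp ((hmeas_inner q).div_const 2)).pow_const 2)
      (fun r => ?_)
    rw [abs_pow]
    exact pow_le_one₀ (abs_nonneg _) (Real.abs_cos_le_one _)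
  set C : EuclideanSpace ℝ (Fin d) → ℝ := fun q =>
    (∫ r, Real.cos (⟪q, r⟫ / 2) ^ 2 * (φ r) ^ 2)
      - (∫ r, Real.cos (⟪q, r⟫ / 2) * (φ r) ^ 2) ^ 2 with hC
  -- strict bound for each q
  have hstrict : ∀ q, C q < 1 := by
    intro q
    rcases eq_or_ne q 0 with rfl | hq
    · simp only [hC, inner_zero_left, zero_div, Real.cos_zero, one_pow, one_mul, hnorm]
      norm_num
    · have hg_int : Integrable
          (fun r => (1 - Real.cos (⟪q, r⟫ / 2) ^ 2) * (φ r) ^ 2) := by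
        refine (hf_int.sub (hint2 q)).congr (Eventually.of_forall fun r => ?_)
        simp only [Pi.sub_apply]
        ring
      have hg_nn : ∀ r, (0:ℝ) ≤ (1 - Real.cos (⟪q, r⟫ / 2) ^ 2) * (φ r) ^ 2 := by
        intro r
        apply mul_nonneg _ (hf_nn r)
        nlinarith [Real.neg_one_le_cos (⟪q, r⟫ / 2), Real.cos_le_one (⟪q, r⟫ / 2)]
      have hbad : volume {r : EuclideanSpace ℝ (Fin d) |
          Real.cos (⟪q, r⟫ / 2) ^ 2 = 1} = 0 := by
        refine measure_mono_null (fun r hr => ?_)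
          (measure_iUnion_null fun k : ℤ =>
            hyperplane_null d q hq ((k : ℝ) * (2 * π)))
        simp only [Set.mem_setOf_eq] at hr
        have hsin : Real.sin (⟪q, r⟫ / 2) = 0 := by
          have := Real.sin_sq_add_cos_sq (⟪q, r⟫ / 2)
          nlinarith
        obtain ⟨n, hn⟩ := Real.sin_eq_zero_iff.mp hsin
        refine Set.mem_iUnion.mpr ⟨n, ?_⟩
        simp only [Set.mem_setOf_eq]
        linarith
      have hpos : 0 < ∫ r, (1 - Real.cos (⟪q, r⟫ / 2) ^ 2) * (φ r) ^ 2 := by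
        rcases (integral_nonneg (f := fun r => (1 - Real.cos (⟪q, r⟫ / 2) ^ 2) * (φ r) ^ 2) hg_nn).lt_or_eq with h | h
        · exact h
        · exfalso
          have hae : ∀ᵐ r, (1 - Real.cos (⟪q, r⟫ / 2) ^ 2) * (φ r) ^ 2 = 0 :=
            (integral_eq_zero_iff_of_nonneg hg_nn hg_int).mp h.symm
          have hbad_ae : ∀ᵐ r : EuclideanSpace ℝ (Fin d),
              r ∉ {r : EuclideanSpace ℝ (Fin d) | Real.cos (⟪q, r⟫ / 2) ^ 2 = 1} :=
            measure_eq_zero_iff_ae_notMem.mp hbad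
          have hf0 : ∀ᵐ r : EuclideanSpace ℝ (Fin d), (φ r) ^ 2 = 0 := by
            filter_upwards [hae, hbad_ae] with r h1 h2
            rcases mul_eq_zero.mp h1 with h3 | h3
            · exact absurd (show Real.cos (⟪q, r⟫ / 2) ^ 2 = 1 by linarith) h2
            · exact h3
          have : ∫ r, (φ r) ^ 2 = 0 := integral_eq_zero_of_ae hf0
          rw [hnorm] at this
          exact one_ne_zero this
      have hsplit : ∫ r, (1 - Real.cos (⟪q, r⟫ / 2) ^ 2) * (φ r) ^ 2
          = (∫ r, (φ r) ^ 2) - ∫ r, Real.cos (⟪q, r⟫ / 2) ^ 2 * (φ r) ^ 2 := by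
        rw [← integral_sub hf_int (hint2 q)]
        refine integral_congr_ae (Eventually.of_forall fun r => ?_)
        simp only [Pi.sub_apply]
        ring
      rw [hnorm] at hsplit
      have hkey : ∫ r, Real.cos (⟪q, r⟫ / 2) ^ 2 * (φ r) ^ 2 < 1 := by linarith
      calc C q ≤ ∫ r, Real.cos (⟪q, r⟫ / 2) ^ 2 * (φ r) ^ 2 :=
            sub_le_self _ (sq_nonneg _)
        _ < 1 := hkey
  -- continuity
  have hcont : Continuous C := by
    have h1 : Continuous fun q : EuclideanSpace ℝ (Fin d) =>
        ∫ r, Real.cos (⟪q, r⟫ / 2) ^ 2 * (φ r) ^ 2 := by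
      refine continuous_of_dominated (fun q => (hint2 q).aestronglyMeasurable)
        (fun q => Eventually.of_forall fun r => ?_) hf_int
        (Eventually.of_forall fun r => ?_)
      · rw [Real.norm_eq_abs, abs_mul, abs_pow, abs_pow, sq_abs (φ r)]
        have : |Real.cos (⟪q, r⟫ / 2)| ^ 2 ≤ 1 :=
          pow_le_one₀ (abs_nonneg _) (Real.abs_cos_le_one _)
        nlinarith [hf_nn r]
      · exact ((Real.continuous_cos.comp
          (((continuous_id.inner continuous_const)).div_const 2)).pow 2).mul continuous_const
    have h2 : Continuous fun q : EuclideanSpace ℝ (Fin d) =>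
        ∫ r, Real.cos (⟪q, r⟫ / 2) * (φ r) ^ 2 := by
      refine continuous_of_dominated (fun q => (hint1 q).aestronglyMeasurable)
        (fun q => Eventually.of_forall fun r => ?_) hf_int
        (Eventually.of_forall fun r => ?_)
      · rw [Real.norm_eq_abs, abs_mul, abs_pow, sq_abs (φ r)]
        have := Real.abs_cos_le_one (⟪q, r⟫ / 2)
        nlinarith [hf_nn r]
      · exact (Real.continuous_cos.comp
          (((continuous_id.inner continuous_const)).div_const 2)).mul continuous_const
    exact h1.sub (h2.pow 2)
  -- decay
  have hdecay : ∀ᶠ q in cocompact (EuclideanSpace ℝ (Fin d)), C q < 3/4 := by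
    have hint3 : ∀ q : EuclideanSpace ℝ (Fin d),
        Integrable (fun r => Real.cos (1 * ⟪q, r⟫) * (φ r) ^ 2) :=
      fun q => hbdd_int _ (Real.measurable_cos.comp ((hmeas_inner q).const_mul 1))
        (fun r => Real.abs_cos_le_one _)
    have hhalf : ∀ q : EuclideanSpace ℝ (Fin d),
        (∫ r, Real.cos (⟪q, r⟫ / 2) ^ 2 * (φ r) ^ 2)
          = 1/2 + (∫ r, Real.cos (1 * ⟪q, r⟫) * (φ r) ^ 2)/2 := by
      intro q
      have hpt : ∀ r : EuclideanSpace ℝ (Fin d),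
          Real.cos (⟪q, r⟫ / 2) ^ 2 * (φ r) ^ 2
            = (1/2) * (φ r) ^ 2 + (1/2) * (Real.cos (1 * ⟪q, r⟫) * (φ r) ^ 2) := by
        intro r
        have harg : (2:ℝ) * (⟪q, r⟫ / 2) = 1 * ⟪q, r⟫ := by ring
        rw [Real.cos_sq, harg]
        ring
      rw [integral_congr_ae (Eventually.of_forall hpt),
        integral_add (hf_int.const_mul _) ((hint3 q).const_mul _),
        integral_const_mul, integral_const_mul, hnorm]
      ring
    have hT1 := rl_cos d _ hf_int 1 one_ne_zero
    have hT2 := rl_cos d _ hf_int 2⁻¹ (by norm_num)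
    have hCrw : C = fun q : EuclideanSpace ℝ (Fin d) =>
        1/2 + (∫ r, Real.cos (1 * ⟪q, r⟫) * (φ r) ^ 2)/2
          - (∫ r, Real.cos (2⁻¹ * ⟪q, r⟫) * (φ r) ^ 2) ^ 2 := by
      funext q
      rw [hC]
      simp only [hhalf q]
      congr 2
      refine integral_congr_ae (Eventually.of_forall fun r => ?_)
      show Real.cos (⟪q, r⟫ / 2) * (φ r) ^ 2 = Real.cos (2⁻¹ * ⟪q, r⟫) * (φ r) ^ 2
      rw [div_eq_inv_mul]
    have hT : Tendsto C (cocompact (EuclideanSpace ℝ (Fin d)))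
        (nhds (1/2 + (0:ℝ)/2 - (0:ℝ) ^ 2)) := by
      rw [hCrw]
      exact (tendsto_const_nhds.add (hT1.div_const 2)).sub (hT2.pow 2)
    have hlt : (1:ℝ)/2 + (0:ℝ)/2 - (0:ℝ) ^ 2 < 3/4 := by norm_num
    exact hT.eventually (eventually_lt_nhds hlt)
  -- assembly
  rw [Filter.eventually_iff, Filter.mem_cocompact] at hdecay
  obtain ⟨K, hKc, hKsub⟩ := hdecay
  obtain ⟨R, hR⟩ := hKc.isBounded.subset_closedBall 0
  have hScomp : IsCompact (Metric.closedBall (0:EuclideanSpace ℝ (Fin d)) (max R 0)) :=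
    isCompact_closedBall _ _
  have hSne : (Metric.closedBall (0:EuclideanSpace ℝ (Fin d)) (max R 0)).Nonempty :=
    ⟨0, Metric.mem_closedBall_self (le_max_right _ _)⟩
  obtain ⟨q₀, hq₀S, hq₀max⟩ := hScomp.exists_isMaxOn hSne hcont.continuousOn
  set M : ℝ := max (C q₀) (3/4) with hM
  have hM1 : M < 1 := max_lt (hstrict q₀) (by norm_num)
  refine ⟨1 - M, by linarith, fun q => ?_⟩
  have hgoal : C q ≤ 1 - (1 - M) := by
    rw [sub_sub_cancel]
    by_cases hq : q ∈ Metric.closedBall (0:EuclideanSpace ℝ (Fin d)) (max R 0)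
    · exact le_trans (hq₀max hq) (le_max_left _ _)
    · have hqK : q ∉ K := fun h => hq (Metric.closedBall_subset_closedBall (le_max_left _ _) (hR h))
      have h3 := hKsub hqK
      simp only [Set.mem_setOf_eq] at h3
      exact le_trans h3.le (le_max_right _ _)
  exact hgoal
end
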